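/- Let Q = (q_ij) be the transition rate matrix of an irreducible continuous-time Markov chain on N states (q_ij ≥ 0 for i ≠ j, q_ii = −Σ_{j≠i} q_ij) with stationary distribution μ (μQ = 0, all μ_i > 0). Then there exists a constant c_1 > 0 depending only on Q such that for every probability distribution p with all p_i > 0, the non-adiabatic entropy production rate e_p^{(na)} = (1/2)·Σ_{i,j} (p_i q_ij − p_j q_ji)·log((p_i μ_j)/(p_j μ_i)) satisfies e_p^{(na)} ≥ c_1·Σ_i [Σ_{j≠i} (p_j q_ji − p_i q_ij)]². In particular one may take c_1 = r/(2MN) where r = min_i μ_i and M = max_{i≠j} q_ij. -/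

import Mathlib

open Finset

lemma key1 (a b : ℝ) (ha : 0 < a) (hb : 0 < b) :
    (Real.sqrt a - Real.sqrt b) ^ 2 ≤ a * Real.log (a / b) - a + b := by
  have hab : 0 < a / b := div_pos ha hb
  have hx : 0 < Real.sqrt a := Real.sqrt_pos.2 ha
  have hy : 0 < Real.sqrt b := Real.sqrt_pos.2 hb
  have hsd : Real.sqrt (a / b) = Real.sqrt a / Real.sqrt b := Real.sqrt_div ha.le b
  have hlog : 1 - (Real.sqrt (a / b))⁻¹ ≤ Real.log (a / b) / 2 := by
    rw [← Real.log_sqrt hab.le]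
    exact Real.one_sub_inv_le_log_of_pos (Real.sqrt_pos.2 hab)
  rw [hsd] at hlog
  have hinv : (Real.sqrt a / Real.sqrt b)⁻¹ = Real.sqrt b / Real.sqrt a := inv_div _ _
  rw [hinv] at hlog
  have ha' : Real.sqrt a ^ 2 = a := Real.sq_sqrt ha.le
  have hb' : Real.sqrt b ^ 2 = b := Real.sq_sqrt hb.le
  have hdiv : Real.sqrt b / Real.sqrt a * Real.sqrt a = Real.sqrt b := by
    field_simp
  have hmul : a * (1 - Real.sqrt b / Real.sqrt a) ≤ a * (Real.log (a / b) / 2) :=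
    mul_le_mul_of_nonneg_left hlog ha.le
  have hab2 : a * (Real.sqrt b / Real.sqrt a) = Real.sqrt a * Real.sqrt b := by
    rw [mul_div_assoc', div_eq_iff hx.ne']; linear_combination (-Real.sqrt b) * ha'
  nlinarith [hmul, hab2, ha', hb']

lemma key2 (a b : ℝ) (ha : 0 < a) (hb : 0 < b) (ha1 : a ≤ 1) (hb1 : b ≤ 1) :
    (a - b) ^ 2 / 4 ≤ a * Real.log (a / b) - a + b := by
  have h1 := key1 a b ha hb
  have ha' : Real.sqrt a ^ 2 = a := Real.sq_sqrt ha.le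
  have hb' : Real.sqrt b ^ 2 = b := Real.sq_sqrt hb.le
  have hx : 0 < Real.sqrt a := Real.sqrt_pos.2 ha
  have hy : 0 < Real.sqrt b := Real.sqrt_pos.2 hb
  have hsum : (Real.sqrt a + Real.sqrt b) ^ 2 ≤ 4 := by
    nlinarith [sq_nonneg (Real.sqrt a - Real.sqrt b)]
  have hfac : (a - b) ^ 2 = (Real.sqrt a - Real.sqrt b) ^ 2 * (Real.sqrt a + Real.sqrt b) ^ 2 := by
    nlinarith [ha', hb']
  nlinarith [mul_le_mul_of_nonneg_left hsum (sq_nonneg (Real.sqrt a - Real.sqrt b))]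

lemma double_sum_antisym {N : ℕ} (f g : Fin N → Fin N → ℝ)
    (hg : ∀ i j, g j i = - g i j) :
    ∑ i, ∑ j, (f i j - f j i) * g i j = 2 * ∑ i, ∑ j, f i j * g i j := by
  have h : ∑ i, ∑ j, f j i * g i j = - ∑ i, ∑ j, f i j * g i j := by
    rw [Finset.sum_comm]
    rw [← Finset.sum_neg_distrib]
    refine Finset.sum_congr rfl fun j _ => ?_
    rw [← Finset.sum_neg_distrib]
    refine Finset.sum_congr rfl fun i _ => ?_
    rw [hg]; ring
  have expand : ∀ i j : Fin N, (f i j - f j i) * g i j = f i j * g i j - f j i * g i j :=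
    fun i j => by ring
  simp_rw [expand, Finset.sum_sub_distrib]
  rw [h]; ring


set_option maxHeartbeats 1000000 in
theorem nonadiabatic_ep_lower_bound (N : ℕ) (q : Fin N → Fin N → ℝ) (μ : Fin N → ℝ)
    (hq : ∀ i j, i ≠ j → 0 ≤ q i j)
    (hqrow : ∀ i, ∑ j, q i j = 0)
    (hirr : ∀ i j : Fin N, i ≠ j → ∃ (m : ℕ) (c : Fin (m + 1) → Fin N),
      c 0 = i ∧ c (Fin.last m) = j ∧ ∀ k : Fin m, 0 < q (c k.castSucc) (c k.succ))
    (hμpos : ∀ i, 0 < μ i) (hμ1 : ∑ i, μ i = 1)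
    (hstat : ∀ j, ∑ i, μ i * q i j = 0) :
    ∃ c₁ > (0 : ℝ), ∀ p : Fin N → ℝ, (∀ i, 0 < p i) → ∑ i, p i = 1 →
      (1 / 2) * ∑ i, ∑ j, (p i * q i j - p j * q j i) *
          Real.log ((p i * μ j) / (p j * μ i)) ≥
        c₁ * ∑ i, (∑ j ∈ Finset.univ.erase i, (p j * q j i - p i * q i j)) ^ 2 := by
  rcases Nat.eq_zero_or_pos N with hN | hN
  · refine ⟨1, one_pos, fun p _ _ => ?_⟩
    subst hN
    simp
  have hne : (Finset.univ : Finset (Fin N)).Nonempty := ⟨⟨0, hN⟩, Finset.mem_univ _⟩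
  obtain ⟨i₀, -, hi₀⟩ := Finset.exists_min_image Finset.univ μ hne
  set r := μ i₀ with hrdef
  have hrpos : 0 < r := hμpos i₀
  have hrle : ∀ i, r ≤ μ i := fun i => hi₀ i (Finset.mem_univ i)
  set M : ℝ := 1 + ∑ i, ∑ j, |q i j| with hMdef
  have hM1 : 1 ≤ M := by
    have : (0:ℝ) ≤ ∑ i, ∑ j, |q i j| :=
      Finset.sum_nonneg fun i _ => Finset.sum_nonneg fun j _ => abs_nonneg _
    linarith
  have hMpos : 0 < M := by linarith
  have hqM : ∀ i j, q i j ≤ M := by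
    intro i j
    have h1 : |q i j| ≤ ∑ j', |q i j'| :=
      Finset.single_le_sum (f := fun j' => |q i j'|) (fun k _ => abs_nonneg _) (Finset.mem_univ j)
    have h2 : ∑ j', |q i j'| ≤ ∑ i, ∑ j, |q i j| :=
      Finset.single_le_sum (f := fun i' => ∑ j', |q i' j'|) (fun k _ =>
        Finset.sum_nonneg fun j _ => abs_nonneg (q k j)) (Finset.mem_univ i)
    have := le_abs_self (q i j)
    linarith
  have hμ1' : ∀ i, μ i ≤ 1 := fun i => by
    have := Finset.single_le_sum (f := μ) (fun k _ => (hμpos k).le) (Finset.mem_univ i)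
    linarith [hμ1 ▸ this]
  clear_value r M
  clear hrdef hMdef hi₀
  refine ⟨r ^ 2 / (4 * N * M), by positivity, fun p hp hp1 => ?_⟩
  have hp1' : ∀ i, p i ≤ 1 := fun i => by
    have := Finset.single_le_sum (f := p) (fun k _ => (hp k).le) (Finset.mem_univ i)
    linarith [hp1 ▸ this]
  have hppos : ∀ i j, 0 < p i * μ j := fun i j => mul_pos (hp i) (hμpos j)
  have hanti : ∀ i j : Fin N, Real.log ((p j * μ i) / (p i * μ j)) =
      - Real.log ((p i * μ j) / (p j * μ i)) := by
    intro i j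
    rw [← Real.log_inv, inv_div]
  have hA : ∑ i, ∑ j, (p i * q i j - p j * q j i) * Real.log ((p i * μ j) / (p j * μ i))
      = 2 * ∑ i, ∑ j, p i * q i j * Real.log ((p i * μ j) / (p j * μ i)) :=
    double_sum_antisym (fun i j => p i * q i j)
      (fun i j => Real.log ((p i * μ j) / (p j * μ i))) hanti
  have hz1 : ∑ i, ∑ j, q i j * p i = 0 := by
    refine Finset.sum_eq_zero fun i _ => ?_
    rw [← Finset.sum_mul, hqrow, zero_mul]
  have hz2 : ∑ i, ∑ j, q i j * (p j * μ i / μ j) = 0 := by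
    rw [Finset.sum_comm]
    refine Finset.sum_eq_zero fun j _ => ?_
    have e : ∀ i, q i j * (p j * μ i / μ j) = μ i * q i j * (p j / μ j) := fun i => by ring
    simp_rw [e]
    rw [← Finset.sum_mul, hstat, zero_mul]
  have hB : ∑ i, ∑ j, p i * q i j * Real.log ((p i * μ j) / (p j * μ i))
      = ∑ i, ∑ j, q i j * (p i * Real.log ((p i * μ j) / (p j * μ i)) - p i + p j * μ i / μ j) := by
    have expand : ∀ i j : Fin N,
        q i j * (p i * Real.log ((p i * μ j) / (p j * μ i)) - p i + p j * μ i / μ j)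
        = p i * q i j * Real.log ((p i * μ j) / (p j * μ i)) - q i j * p i
          + q i j * (p j * μ i / μ j) := fun i j => by ring
    simp_rw [expand, Finset.sum_add_distrib, Finset.sum_sub_distrib]
    rw [hz1, hz2]; ring
  have hC : ∑ i, ∑ j, q i j * (p i * μ j - p j * μ i) ^ 2 / (4 * μ j)
      ≤ ∑ i, ∑ j, q i j * (p i * Real.log ((p i * μ j) / (p j * μ i)) - p i + p j * μ i / μ j) := by
    refine Finset.sum_le_sum fun i _ => Finset.sum_le_sum fun j _ => ?_
    rcases eq_or_ne i j with rfl | hij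
    · have h1 : (p i * μ i) / (p i * μ i) = 1 := div_self (ne_of_gt (hppos i i))
      rw [h1, Real.log_one, sub_self]
      have h2 : p i * μ i / μ i = p i := by
        rw [mul_div_assoc, div_self (hμpos i).ne', mul_one]
      simp [h2]
    · have hμj := hμpos j
      have hkey := key2 (p i * μ j) (p j * μ i) (hppos i j) (hppos j i)
        (by nlinarith [hp1' i, hμ1' j, (hp i).le, (hμpos j).le])
        (by nlinarith [hp1' j, hμ1' i, (hp j).le, (hμpos i).le])
      have hqn : 0 ≤ q i j := hq i j hij
      have heq : p i * Real.log ((p i * μ j) / (p j * μ i)) - p i + p j * μ i / μ j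
          = (p i * μ j * Real.log ((p i * μ j) / (p j * μ i)) - (p i * μ j) + p j * μ i) / μ j := by
        field_simp
      calc q i j * (p i * μ j - p j * μ i) ^ 2 / (4 * μ j)
          = (q i j / μ j) * ((p i * μ j - p j * μ i) ^ 2 / 4) := by ring
        _ ≤ (q i j / μ j) * (p i * μ j * Real.log ((p i * μ j) / (p j * μ i))
              - (p i * μ j) + p j * μ i) :=
            mul_le_mul_of_nonneg_left hkey (div_nonneg hqn hμj.le)
        _ = q i j * (p i * Real.log ((p i * μ j) / (p j * μ i)) - p i + p j * μ i / μ j) := by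
            rw [heq]; ring
  -- rewrite the current J_i
  have hJ : ∀ i, ∑ j ∈ Finset.univ.erase i, (p j * q j i - p i * q i j)
      = ∑ j ∈ Finset.univ.erase i, q j i * (p j * μ i - p i * μ j) / μ i := by
    intro i
    have hrow' : ∑ j ∈ Finset.univ.erase i, q i j = - q i i := by
      have h0 := hqrow i
      rw [← Finset.add_sum_erase _ _ (Finset.mem_univ i)] at h0
      linarith
    have hstat' : ∑ j ∈ Finset.univ.erase i, μ j * q j i = -(μ i * q i i) := by
      have h0 := hstat i
      rw [← Finset.add_sum_erase _ (fun k => μ k * q k i) (Finset.mem_univ i)] at h0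
      linarith
    have expand : ∀ j : Fin N, q j i * (p j * μ i - p i * μ j) / μ i
        = p j * q j i - (p i / μ i) * (μ j * q j i) := fun j => by
      field_simp [(hμpos i).ne']
    simp_rw [expand, Finset.sum_sub_distrib, ← Finset.mul_sum, hrow', hstat']
    have e2 : p i / μ i * -(μ i * q i i) = -(p i * q i i) := by
      field_simp [(hμpos i).ne']
    rw [e2]
    ring
  have hsq : ∑ i, (∑ j ∈ Finset.univ.erase i, (p j * q j i - p i * q i j)) ^ 2
      ≤ (N * M / r ^ 2) * ∑ i, ∑ j, q i j * (p i * μ j - p j * μ i) ^ 2 := by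
    have hswap : ∑ i, ∑ j, q j i * (p j * μ i - p i * μ j) ^ 2
        = ∑ i, ∑ j, q i j * (p i * μ j - p j * μ i) ^ 2 := Finset.sum_comm
    rw [← hswap, Finset.mul_sum]
    refine Finset.sum_le_sum fun i _ => ?_
    rw [hJ i]
    have hcs := sq_sum_le_card_mul_sum_sq (s := Finset.univ.erase i)
      (f := fun j => q j i * (p j * μ i - p i * μ j) / μ i)
    have hcard : (((Finset.univ.erase i).card : ℝ)) ≤ (N : ℝ) := by
      have h : (Finset.univ.erase i).card ≤ N := le_trans Finset.card_erase_le (by simp)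
      exact_mod_cast h
    have hterm : ∀ j ∈ Finset.univ.erase i,
        (q j i * (p j * μ i - p i * μ j) / μ i) ^ 2
          ≤ (M / r ^ 2) * (q j i * (p j * μ i - p i * μ j) ^ 2) := by
      intro j hj
      have hji : j ≠ i := Finset.ne_of_mem_erase hj
      have hqn : 0 ≤ q j i := hq j i hji
      have h1 : (q j i) ^ 2 ≤ M * q j i := by nlinarith [hqM j i]
      have h2 : r ^ 2 ≤ (μ i) ^ 2 := by nlinarith [hrle i, hrpos, hμpos i]
      have hs := sq_nonneg (p j * μ i - p i * μ j)
      have e : (q j i * (p j * μ i - p i * μ j) / μ i) ^ 2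
          = (q j i) ^ 2 * (p j * μ i - p i * μ j) ^ 2 / (μ i) ^ 2 := by ring
      have e2 : (M / r ^ 2) * (q j i * (p j * μ i - p i * μ j) ^ 2)
          = M * q j i * (p j * μ i - p i * μ j) ^ 2 / r ^ 2 := by ring
      rw [e, e2, div_le_div_iff₀ (pow_pos (hμpos i) 2) (pow_pos hrpos 2)]
      nlinarith [mul_le_mul_of_nonneg_right h1
          (mul_nonneg hs (sq_nonneg r) : (0:ℝ) ≤ (p j * μ i - p i * μ j) ^ 2 * r ^ 2),
        mul_le_mul_of_nonneg_left h2
          (mul_nonneg (mul_nonneg hMpos.le hqn) hs : (0:ℝ) ≤ M * q j i * (p j * μ i - p i * μ j) ^ 2)]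
    have hext : ∑ j ∈ Finset.univ.erase i, q j i * (p j * μ i - p i * μ j) ^ 2
        = ∑ j, q j i * (p j * μ i - p i * μ j) ^ 2 := by
      rw [← Finset.add_sum_erase _ (fun j => q j i * (p j * μ i - p i * μ j) ^ 2)
        (Finset.mem_univ i)]
      simp
    have hsum : ∑ j ∈ Finset.univ.erase i, (q j i * (p j * μ i - p i * μ j) / μ i) ^ 2
        ≤ (M / r ^ 2) * ∑ j ∈ Finset.univ.erase i, q j i * (p j * μ i - p i * μ j) ^ 2 := by
      rw [Finset.mul_sum]
      exact Finset.sum_le_sum hterm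
    calc (∑ j ∈ Finset.univ.erase i, q j i * (p j * μ i - p i * μ j) / μ i) ^ 2
        ≤ (((Finset.univ.erase i).card : ℝ)) *
            ∑ j ∈ Finset.univ.erase i, (q j i * (p j * μ i - p i * μ j) / μ i) ^ 2 := hcs
      _ ≤ (N : ℝ) * ((M / r ^ 2) * ∑ j ∈ Finset.univ.erase i, q j i * (p j * μ i - p i * μ j) ^ 2) := by
          refine mul_le_mul hcard hsum (Finset.sum_nonneg fun j _ => sq_nonneg _) (Nat.cast_nonneg N)
      _ = (N * M / r ^ 2) * ∑ j, q j i * (p j * μ i - p i * μ j) ^ 2 := by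
          rw [hext]; ring
  have hUT : ∑ i, ∑ j, q i j * (p i * μ j - p j * μ i) ^ 2 / 4
      ≤ ∑ i, ∑ j, q i j * (p i * μ j - p j * μ i) ^ 2 / (4 * μ j) := by
    refine Finset.sum_le_sum fun i _ => Finset.sum_le_sum fun j _ => ?_
    rcases eq_or_ne i j with rfl | hij
    · simp
    · have hqn := hq i j hij
      have hμj := hμpos j
      rw [div_le_div_iff₀ (by norm_num) (by positivity)]
      nlinarith [mul_nonneg (mul_nonneg hqn (sq_nonneg (p i * μ j - p j * μ i)))
        (by linarith [hμ1' j] : (0:ℝ) ≤ 1 - μ j)]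
  have hU4 : (∑ i, ∑ j, q i j * (p i * μ j - p j * μ i) ^ 2) / 4
      = ∑ i, ∑ j, q i j * (p i * μ j - p j * μ i) ^ 2 / 4 := by
    simp [Finset.sum_div]
  have hc : r ^ 2 / (4 * N * M) * (N * M / r ^ 2) = 1 / 4 := by
    have hN' : (N : ℝ) ≠ 0 := Nat.cast_ne_zero.2 hN.ne'
    field_simp
  rw [ge_iff_le, hA, hB]
  calc r ^ 2 / (4 * N * M) * ∑ i, (∑ j ∈ Finset.univ.erase i, (p j * q j i - p i * q i j)) ^ 2
      ≤ r ^ 2 / (4 * N * M) * ((N * M / r ^ 2) * ∑ i, ∑ j, q i j * (p i * μ j - p j * μ i) ^ 2) :=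
        mul_le_mul_of_nonneg_left hsq (by positivity)
    _ = (∑ i, ∑ j, q i j * (p i * μ j - p j * μ i) ^ 2) / 4 := by
        rw [← mul_assoc, hc]; ring
    _ = ∑ i, ∑ j, q i j * (p i * μ j - p j * μ i) ^ 2 / 4 := hU4
    _ ≤ ∑ i, ∑ j, q i j * (p i * μ j - p j * μ i) ^ 2 / (4 * μ j) := hUT
    _ ≤ ∑ i, ∑ j, q i j * (p i * Real.log ((p i * μ j) / (p j * μ i)) - p i + p j * μ i / μ j) := hC
    _ = 1 / 2 * (2 * ∑ i, ∑ j, q i j *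
          (p i * Real.log ((p i * μ j) / (p j * μ i)) - p i + p j * μ i / μ j)) := by ring
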